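/- arXiv:0801.4862 — 8 statements merged into one kernel-verified Lean document; each statement's English description precedes it below -/
import Mathlib

section
/- Let P be a polynomial in two variables over ℂ with P(x,x) = 0 for all x. Then P belongs to the subalgebra of ℂ[x,y] generated by all polynomials of the form p(x) - p(y), where p ranges over ℂ[t]. -/
open MvPolynomial

noncomputable section StmtAux

private abbrev Sgen : Set (MvPolynomial (Fin 2) ℂ) :=
  {q : MvPolynomial (Fin 2) ℂ | ∃ p : Polynomial ℂ,
    q = Polynomial.aeval (MvPolynomial.X 0) p - Polynomial.aeval (MvPolynomial.X 1) p}

private abbrev SS : NonUnitalSubalgebra ℂ (MvPolynomial (Fin 2) ℂ) :=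
  NonUnitalAlgebra.adjoin ℂ Sgen

private lemma pow_sub_mem (m : ℕ) :
    (X 0 : MvPolynomial (Fin 2) ℂ) ^ m - X 1 ^ m ∈ SS :=
  NonUnitalAlgebra.subset_adjoin ℂ ⟨Polynomial.X ^ m, by simp⟩

private lemma D_mem : (X 0 - X 1 : MvPolynomial (Fin 2) ℂ) ∈ SS := by
  simpa using pow_sub_mem 1

private lemma key : ∀ n a b : ℕ, a + b = n →
    (X 0 - X 1 : MvPolynomial (Fin 2) ℂ) * X 0 ^ a * X 1 ^ b ∈ SS := by
  intro n
  induction n with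
  | zero =>
    intro a b hab
    obtain ⟨rfl, rfl⟩ : a = 0 ∧ b = 0 := by omega
    simpa using D_mem
  | succ m ih =>
    -- consecutive monomial multiples of D (total degree m+1) differ by an element of SS
    have cong : ∀ a b : ℕ, a + b = m →
        (X 0 - X 1 : MvPolynomial (Fin 2) ℂ) * X 0 ^ (a+1) * X 1 ^ b
          - (X 0 - X 1) * X 0 ^ a * X 1 ^ (b+1) ∈ SS := by
      intro a b hab
      have h := mul_mem D_mem (ih a b hab)
      have heq : (X 0 - X 1 : MvPolynomial (Fin 2) ℂ) *
          ((X 0 - X 1) * X 0 ^ a * X 1 ^ b)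
          = (X 0 - X 1) * X 0 ^ (a+1) * X 1 ^ b
            - (X 0 - X 1) * X 0 ^ a * X 1 ^ (b+1) := by ring
      rwa [heq] at h
    -- telescoping: all such monomial multiples are congruent to D * X0^(m+1)
    have tele : ∀ b a : ℕ, a + b = m + 1 →
        (X 0 - X 1 : MvPolynomial (Fin 2) ℂ) * X 0 ^ (m+1)
          - (X 0 - X 1) * X 0 ^ a * X 1 ^ b ∈ SS := by
      intro b
      induction b with
      | zero =>
        intro a ha
        obtain rfl : a = m + 1 := by omega
        simpa using zero_mem SS
      | succ c ihc =>
        intro a ha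
        have h1 := ihc (a+1) (by omega)
        have h2 := cong a c (by omega)
        have := add_mem h1 h2
        convert this using 1
        ring
    -- sum identity
    have hsum : ∑ a ∈ Finset.range (m+2),
        (X 0 - X 1 : MvPolynomial (Fin 2) ℂ) * X 0 ^ a * X 1 ^ (m+1-a)
        = X 0 ^ (m+2) - X 1 ^ (m+2) := by
      calc ∑ a ∈ Finset.range (m+2),
            (X 0 - X 1 : MvPolynomial (Fin 2) ℂ) * X 0 ^ a * X 1 ^ (m+1-a)
          = ∑ a ∈ Finset.range (m+2),
            ((X 0 : MvPolynomial (Fin 2) ℂ) ^ (a+1) * X 1 ^ (m+2-(a+1))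
              - X 0 ^ a * X 1 ^ (m+2-a)) := by
            apply Finset.sum_congr rfl
            intro a ha
            have ha' : a ≤ m + 1 := by
              have := Finset.mem_range.mp ha; omega
            have e1 : m + 2 - (a + 1) = m + 1 - a := by omega
            have e2 : m + 2 - a = (m + 1 - a) + 1 := by omega
            rw [e1, e2]
            ring
        _ = X 0 ^ (m+2) * X 1 ^ (m+2-(m+2)) - X 0 ^ 0 * X 1 ^ (m+2-0) :=
            Finset.sum_range_sub
              (fun a => (X 0 : MvPolynomial (Fin 2) ℂ) ^ a * X 1 ^ (m+2-a)) (m+2)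
        _ = X 0 ^ (m+2) - X 1 ^ (m+2) := by simp
    have hsum_mem : ∑ a ∈ Finset.range (m+2),
        (X 0 - X 1 : MvPolynomial (Fin 2) ℂ) * X 0 ^ a * X 1 ^ (m+1-a) ∈ SS := by
      rw [hsum]; exact pow_sub_mem (m+2)
    have hdiffs : ∑ a ∈ Finset.range (m+2),
        ((X 0 - X 1 : MvPolynomial (Fin 2) ℂ) * X 0 ^ (m+1)
          - (X 0 - X 1) * X 0 ^ a * X 1 ^ (m+1-a)) ∈ SS := by
      apply sum_mem
      intro a ha
      exact tele (m+1-a) a (by have := Finset.mem_range.mp ha; omega)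
    have htot := add_mem hdiffs hsum_mem
    have hcomb : (∑ a ∈ Finset.range (m+2),
        ((X 0 - X 1 : MvPolynomial (Fin 2) ℂ) * X 0 ^ (m+1)
          - (X 0 - X 1) * X 0 ^ a * X 1 ^ (m+1-a)))
        + ∑ a ∈ Finset.range (m+2),
            (X 0 - X 1 : MvPolynomial (Fin 2) ℂ) * X 0 ^ a * X 1 ^ (m+1-a)
        = ((m+2 : ℂ)) • ((X 0 - X 1 : MvPolynomial (Fin 2) ℂ) * X 0 ^ (m+1)) := by
      rw [← Finset.sum_add_distrib]
      simp only [sub_add_cancel]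
      rw [Finset.sum_const, Finset.card_range, ← Nat.cast_smul_eq_nsmul ℂ]
      norm_num
    rw [hcomb] at htot
    have hc : ((m+2 : ℂ)) ≠ 0 := by
      intro h
      have h2 : (m + 2 : ℕ) = 0 := by exact_mod_cast h
      omega
    have htop : (X 0 - X 1 : MvPolynomial (Fin 2) ℂ) * X 0 ^ (m+1) ∈ SS := by
      have := SMulMemClass.smul_mem ((m+2 : ℂ))⁻¹ htot
      rwa [inv_smul_smul₀ hc] at this
    intro a b hab
    have := sub_mem htop (tele b a hab)
    simpa using this

private lemma mul_D_mem (Q : MvPolynomial (Fin 2) ℂ) :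
    (X 0 - X 1 : MvPolynomial (Fin 2) ℂ) * Q ∈ SS := by
  induction Q using MvPolynomial.induction_on' with
  | monomial d c =>
    have hk := key (d 0 + d 1) (d 0) (d 1) rfl
    have := SMulMemClass.smul_mem c hk
    convert this using 1
    rw [smul_eq_C_mul, monomial_eq, Finsupp.prod_fintype _ _ (fun i => pow_zero _)]
    rw [Fin.prod_univ_two]
    ring
  | add p q hp hq =>
    rw [mul_add]
    exact add_mem hp hq

private lemma dvd_sub_diag (Q : MvPolynomial (Fin 2) ℂ) :
    (X 0 - X 1 : MvPolynomial (Fin 2) ℂ) ∣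
      Q - aeval (fun _ => X 1 : Fin 2 → MvPolynomial (Fin 2) ℂ) Q := by
  induction Q using MvPolynomial.induction_on with
  | C a => simp
  | add p q hp hq =>
    rw [map_add, add_sub_add_comm]
    exact dvd_add hp hq
  | mul_X p i hp =>
    rw [map_mul, aeval_X]
    have h2 : (X 0 - X 1 : MvPolynomial (Fin 2) ℂ) ∣ (X i - X 1) := by
      fin_cases i
      · exact dvd_refl _
      · simp
    have heq : p * X i - (aeval (fun _ => X 1 : Fin 2 → MvPolynomial (Fin 2) ℂ) p) * X 1
        = (p - aeval (fun _ => X 1 : Fin 2 → MvPolynomial (Fin 2) ℂ) p) * X i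
          + (aeval (fun _ => X 1 : Fin 2 → MvPolynomial (Fin 2) ℂ) p) * (X i - X 1) := by
      ring
    rw [heq]
    exact dvd_add (hp.mul_right _) (h2.mul_left _)

end StmtAux

/-- A polynomial `P ∈ ℂ[x,y]` with `P(x,x) = 0` for all `x` belongs to the
(non-unital) subalgebra of `ℂ[x,y]` generated by all polynomials `p(x) - p(y)`, `p ∈ ℂ[t]`. -/
theorem stmt0 (P : MvPolynomial (Fin 2) ℂ)
    (hP : ∀ x : ℂ, MvPolynomial.eval (fun _ => x) P = 0) :
    P ∈ NonUnitalAlgebra.adjoin ℂ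
      {q : MvPolynomial (Fin 2) ℂ | ∃ p : Polynomial ℂ,
        q = Polynomial.aeval (MvPolynomial.X 0) p - Polynomial.aeval (MvPolynomial.X 1) p} := by
  have hzero : aeval (fun _ => X 1 : Fin 2 → MvPolynomial (Fin 2) ℂ) P = 0 := by
    apply MvPolynomial.funext
    intro v
    have : (eval v) (aeval (fun _ => X 1 : Fin 2 → MvPolynomial (Fin 2) ℂ) P)
        = eval (fun _ => v 1) P := by
      have hb : (aeval (fun _ => X 1 : Fin 2 → MvPolynomial (Fin 2) ℂ)) P
          = bind₁ (fun _ : Fin 2 => (X 1 : MvPolynomial (Fin 2) ℂ)) P := rfl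
      have he : ∀ (w : Fin 2 → ℂ) (q : MvPolynomial (Fin 2) ℂ),
          eval w q = eval₂Hom (RingHom.id ℂ) w q := fun _ _ => rfl
      rw [hb, he, eval₂Hom_bind₁, he]
      simp
    rw [this, hP (v 1)]
    simp
  have hdvd : (X 0 - X 1 : MvPolynomial (Fin 2) ℂ) ∣ P := by
    have := dvd_sub_diag P
    rwa [hzero, sub_zero] at this
  obtain ⟨Q, hQ⟩ := hdvd
  rw [hQ]
  exact mul_D_mem Q
end

section
/- Every Lie submodule of M_n(ℂ) over the diagonal algebra D_n is a direct sum S = G ⊕ Z(K), where G is a linear subspace of D_n and Z(K) is the set of matrices supported on a set K of off-diagonal positions. -/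
/-- For `K` a set of positions, `Z(K)` is the space of matrices supported on `K`. -/
noncomputable def offDiagModule (n : ℕ) (K : Set (Fin n × Fin n)) :
    Submodule ℂ (Matrix (Fin n) (Fin n) ℂ) where
  carrier := {a | ∀ j k, (j, k) ∉ K → a j k = 0}
  add_mem' := by
    intro a b ha hb j k h
    simp [Matrix.add_apply, ha j k h, hb j k h]
  zero_mem' := by intro j k h; simp
  smul_mem' := by
    intro c a ha j k h
    simp [Matrix.smul_apply, ha j k h]

open Matrix

set_option linter.unnecessarySeqFocus false

lemma mem_offDiagModule (n : ℕ) (K : Set (Fin n × Fin n)) (a : Matrix (Fin n) (Fin n) ℂ) :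
    a ∈ offDiagModule n K ↔ ∀ j k, (j, k) ∉ K → a j k = 0 := Iff.rfl

/-- commutator with the diagonal idempotent `E_ii`. -/
noncomputable def ccAux (n : ℕ) (i : Fin n) (x : Matrix (Fin n) (Fin n) ℂ) :
    Matrix (Fin n) (Fin n) ℂ :=
  diagonal (Pi.single i 1) * x - x * diagonal (Pi.single i 1)

lemma ccAux_apply (n : ℕ) (i a b : Fin n) (x : Matrix (Fin n) (Fin n) ℂ) :
    ccAux n i x a b = ((if a = i then 1 else 0) - if b = i then 1 else 0) * x a b := by
  simp [ccAux, diagonal_mul, mul_diagonal, Pi.single_apply, sub_mul]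
  try ring

lemma ccAux_key (n : ℕ) (i j : Fin n) (h : i ≠ j) (x : Matrix (Fin n) (Fin n) ℂ) :
    x i j • Matrix.single i j (1:ℂ) =
      (-(2:ℂ))⁻¹ • (ccAux n j (ccAux n i x) + ccAux n i (ccAux n j (ccAux n i x))) := by
  ext a b
  simp only [Matrix.smul_apply, Matrix.add_apply, ccAux_apply, smul_eq_mul, Matrix.single, of_apply]
  by_cases hai : a = i <;> by_cases hbj : b = j <;>
    by_cases haj : a = j <;> by_cases hbi : b = i <;>
    simp_all <;> (try (intros; subst_vars; simp_all)) <;> try ring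

lemma ccAux_mem (n : ℕ) (S : Submodule ℂ (Matrix (Fin n) (Fin n) ℂ))
    (hS : ∀ d x, (∀ i j : Fin n, i ≠ j → d i j = 0) → x ∈ S → d * x - x * d ∈ S)
    (i : Fin n) {x : Matrix (Fin n) (Fin n) ℂ} (hx : x ∈ S) : ccAux n i x ∈ S := by
  refine hS _ _ (fun a b hab => ?_) hx
  simp [Matrix.diagonal_apply_ne _ hab]

lemma entry_mem (n : ℕ) (S : Submodule ℂ (Matrix (Fin n) (Fin n) ℂ))
    (hS : ∀ d x, (∀ i j : Fin n, i ≠ j → d i j = 0) → x ∈ S → d * x - x * d ∈ S)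
    (i j : Fin n) (h : i ≠ j) {x : Matrix (Fin n) (Fin n) ℂ} (hx : x ∈ S) :
    x i j • Matrix.single i j (1:ℂ) ∈ S := by
  rw [ccAux_key n i j h x]
  exact S.smul_mem _ (S.add_mem (ccAux_mem n S hS j (ccAux_mem n S hS i hx))
    (ccAux_mem n S hS i (ccAux_mem n S hS j (ccAux_mem n S hS i hx))))

/-- the off-diagonal part of a matrix -/
noncomputable def odPart (n : ℕ) (x : Matrix (Fin n) (Fin n) ℂ) :
    Matrix (Fin n) (Fin n) ℂ :=
  ∑ i : Fin n, ∑ j : Fin n, if i ≠ j then x i j • Matrix.single i j (1:ℂ) else 0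

lemma odPart_apply (n : ℕ) (x : Matrix (Fin n) (Fin n) ℂ) (a b : Fin n) :
    odPart n x a b = if a ≠ b then x a b else 0 := by
  simp only [odPart, Matrix.sum_apply]
  rw [Finset.sum_eq_single a ?h1 (by simp)]
  · rw [Finset.sum_eq_single b ?h2 (by simp)]
    · by_cases hab : a = b <;> simp [Matrix.single, hab]
    · intro j _ hj
      by_cases h : a = j <;> simp [Matrix.single, h, hj]
  · intro i _ hi
    apply Finset.sum_eq_zero
    intro j _
    by_cases h : i = j <;> simp [Matrix.single, h, hi]

lemma odPart_mem (n : ℕ) (S : Submodule ℂ (Matrix (Fin n) (Fin n) ℂ))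
    (hS : ∀ d x, (∀ i j : Fin n, i ≠ j → d i j = 0) → x ∈ S → d * x - x * d ∈ S)
    {x : Matrix (Fin n) (Fin n) ℂ} (hx : x ∈ S) : odPart n x ∈ S := by
  refine Submodule.sum_mem S fun i _ => Submodule.sum_mem S fun j _ => ?_
  by_cases h : i = j
  · simp [h]
  · simpa [h] using entry_mem n S hS i j h hx

/-- Every Lie `D_n`-submodule of `M_n(ℂ)` is a direct sum `S = G ⊕ Z(K)` with
`G` a subspace of the diagonal matrices and `K` a set of off-diagonal positions. -/
theorem stmt5 (n : ℕ) (S : Submodule ℂ (Matrix (Fin n) (Fin n) ℂ))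
    (hS : ∀ d x, (∀ i j : Fin n, i ≠ j → d i j = 0) → x ∈ S → d * x - x * d ∈ S) :
    ∃ (G : Submodule ℂ (Matrix (Fin n) (Fin n) ℂ)) (K : Set (Fin n × Fin n)),
      (∀ g ∈ G, ∀ i j : Fin n, i ≠ j → g i j = 0) ∧ (∀ p ∈ K, p.1 ≠ p.2) ∧
      S = G ⊔ offDiagModule n K ∧ G ⊓ offDiagModule n K = ⊥ := by
  set Dset : Set (Fin n × Fin n) := {p | p.1 = p.2} with hDset
  set K : Set (Fin n × Fin n) := {p | p.1 ≠ p.2 ∧ ∃ x ∈ S, x p.1 p.2 ≠ 0} with hK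
  set G : Submodule ℂ (Matrix (Fin n) (Fin n) ℂ) := S ⊓ offDiagModule n Dset with hG
  have hGdiag : ∀ g ∈ G, ∀ i j : Fin n, i ≠ j → g i j = 0 := by
    intro g hg i j hij
    exact hg.2 i j (by simpa [hDset] using hij)
  have hZK_le : offDiagModule n K ≤ S := by
    intro a ha
    rw [matrix_eq_sum_single a]
    refine Submodule.sum_mem S fun i _ => Submodule.sum_mem S fun j _ => ?_
    by_cases hmem : (i, j) ∈ K
    · obtain ⟨hij, x, hxS, hxne⟩ := hmem
      have h1 : x i j • Matrix.single i j (1:ℂ) ∈ S := entry_mem n S hS i j hij hxS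
      have h2 : Matrix.single i j (a i j) =
          ((a i j) * (x i j)⁻¹) • (x i j • Matrix.single i j (1:ℂ)) := by
        ext c d
        simp only [Matrix.smul_apply, Matrix.single, of_apply, smul_eq_mul]
        by_cases h : i = c ∧ j = d
        · obtain ⟨rfl, rfl⟩ := h
          simp only [and_self, if_true, smul_eq_mul]
          field_simp
        · simp [h]
      rw [h2]
      exact S.smul_mem _ h1
    · have : a i j = 0 := ha i j hmem
      simp [this]
  refine ⟨G, K, hGdiag, fun p hp => hp.1, le_antisymm ?_ ?_, ?_⟩
  · intro x hx
    have hxo : odPart n x ∈ S := odPart_mem n S hS hx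
    have hxd : x - odPart n x ∈ G := by
      refine ⟨S.sub_mem hx hxo, fun j k hjk => ?_⟩
      have hne : j ≠ k := by simpa [hDset] using hjk
      simp [Matrix.sub_apply, odPart_apply, hne]
    have hxo' : odPart n x ∈ offDiagModule n K := by
      intro j k hjk
      rw [odPart_apply]
      by_cases hne : j ≠ k
      · rw [if_pos hne]
        by_contra hx0
        exact hjk ⟨hne, x, hx, hx0⟩
      · rw [if_neg hne]
    have := Submodule.add_mem_sup hxd hxo'
    simpa [sub_add_cancel] using this
  · exact sup_le inf_le_left hZK_le
  · rw [eq_bot_iff]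
    intro x hx
    have hxG : x ∈ G := hx.1
    have hxZ : x ∈ offDiagModule n K := hx.2
    have : x = 0 := by
      ext j k
      by_cases hjk : j = k
      · subst hjk
        have : (j, j) ∉ K := fun h => h.1 rfl
        simpa using hxZ j j this
      · simpa using hGdiag x hxG j k hjk
    simp [this]
end

section
/- Let B be a unital commutative algebra for which every element Σ a_k ⊗ b_k of B ⊗ B with Σ a_k b_k = 0 lies in the subalgebra T(B) of B ⊗ B generated by {a⊗1 - 1⊗a : a ∈ B}. Then every quotient algebra B/I has the same property. -/
open scoped TensorProduct

/-- If every tensor `t ∈ B ⊗ B` (B unital commutative) with zero contraction lies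
in the subalgebra `T(B)` generated by the elements `a⊗1 - 1⊗a`, then every quotient `B/I` has
the same property. -/
theorem stmt6 (B : Type*) [CommRing B] [Algebra ℂ B]
    (h : ∀ t : B ⊗[ℂ] B, LinearMap.mul' ℂ B t = 0 →
      t ∈ NonUnitalAlgebra.adjoin ℂ
        {x : B ⊗[ℂ] B | ∃ a : B, x = a ⊗ₜ[ℂ] (1 : B) - (1 : B) ⊗ₜ[ℂ] a})
    (I : Ideal B) :
    ∀ t : (B ⧸ I) ⊗[ℂ] (B ⧸ I), LinearMap.mul' ℂ (B ⧸ I) t = 0 →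
      t ∈ NonUnitalAlgebra.adjoin ℂ
        {x : (B ⧸ I) ⊗[ℂ] (B ⧸ I) | ∃ a : B ⧸ I,
          x = a ⊗ₜ[ℂ] (1 : B ⧸ I) - (1 : B ⧸ I) ⊗ₜ[ℂ] a} := by
  intro t ht
  set π : B →ₐ[ℂ] B ⧸ I := Ideal.Quotient.mkₐ ℂ I with hπ
  have hπs : Function.Surjective π := Ideal.Quotient.mkₐ_surjective ℂ I
  set F : B ⊗[ℂ] B →ₐ[ℂ] (B ⧸ I) ⊗[ℂ] (B ⧸ I) := Algebra.TensorProduct.map π π with hF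
  have hFs : Function.Surjective F := by
    have := TensorProduct.map_surjective (g := π.toLinearMap) (g' := π.toLinearMap) hπs hπs
    exact this
  -- naturality of mul'
  have hnat : ∀ s : B ⊗[ℂ] B, LinearMap.mul' ℂ (B ⧸ I) (F s) = π (LinearMap.mul' ℂ B s) := by
    intro s
    induction s using TensorProduct.induction_on with
    | zero => simp
    | tmul a b => simp [hF]
    | add x y hx hy => simp [map_add, hx, hy]
  obtain ⟨s, rfl⟩ := hFs t
  set m : B := LinearMap.mul' ℂ B s with hm
  have hπm : π m = 0 := by rw [← hnat]; exact ht
  have hs' : LinearMap.mul' ℂ B (s - m ⊗ₜ[ℂ] (1 : B)) = 0 := by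
    simp [hm]
  have hmem := h _ hs'
  have hFeq : F s = F (s - m ⊗ₜ[ℂ] (1 : B)) := by
    simp [hF, map_sub, Algebra.TensorProduct.map_tmul, hπm]
  rw [hFeq]
  -- push through the non-unital alg hom
  have := NonUnitalAlgHom.map_adjoin (R := ℂ)
    (f := (F : B ⊗[ℂ] B →ₙₐ[ℂ] (B ⧸ I) ⊗[ℂ] (B ⧸ I)))
    (s := {x : B ⊗[ℂ] B | ∃ a : B, x = a ⊗ₜ[ℂ] (1 : B) - (1 : B) ⊗ₜ[ℂ] a})
  have hmem2 : F (s - m ⊗ₜ[ℂ] (1 : B)) ∈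
      NonUnitalAlgebra.adjoin ℂ
        ((F : B ⊗[ℂ] B →ₙₐ[ℂ] (B ⧸ I) ⊗[ℂ] (B ⧸ I)) ''
          {x : B ⊗[ℂ] B | ∃ a : B, x = a ⊗ₜ[ℂ] (1 : B) - (1 : B) ⊗ₜ[ℂ] a}) := by
    rw [← this]
    exact ⟨_, hmem, rfl⟩
  refine NonUnitalAlgebra.adjoin_le ?_ hmem2
  rintro x ⟨y, ⟨a, rfl⟩, rfl⟩
  exact NonUnitalAlgebra.subset_adjoin ℂ ⟨π a, by
    show F (a ⊗ₜ[ℂ] 1) - F (1 ⊗ₜ[ℂ] a) = _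
    simp [hF]⟩
end

section
/- The set N(B) = {Σ a_i ⊗ b_i ∈ B ⊗ B^op : Σ a_i b_i = 0 and Σ b_i a_i = 0} is a subalgebra of B ⊗ B^op containing T(B), the subalgebra generated by all a⊗1 - 1⊗a. -/
open scoped TensorProduct

/-- The left contraction `B ⊗ B^op → B`, `a ⊗ b ↦ a * b`. -/
noncomputable def leftContraction (B : Type*) [Ring B] [Algebra ℂ B] :
    B ⊗[ℂ] Bᵐᵒᵖ →ₗ[ℂ] B :=
  (LinearMap.mul' ℂ B).comp
    (TensorProduct.map LinearMap.id (MulOpposite.opLinearEquiv ℂ).symm.toLinearMap)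

/-- The right contraction `B ⊗ B^op → B`, `a ⊗ b ↦ b * a`. -/
noncomputable def rightContraction (B : Type*) [Ring B] [Algebra ℂ B] :
    B ⊗[ℂ] Bᵐᵒᵖ →ₗ[ℂ] B :=
  (LinearMap.mul' ℂ B).comp
    ((TensorProduct.map (MulOpposite.opLinearEquiv ℂ).symm.toLinearMap LinearMap.id).comp
      (TensorProduct.comm ℂ B Bᵐᵒᵖ).toLinearMap)

/-- `N(B)`: the tensors with both contractions zero. -/
def NLie (B : Type*) [Ring B] [Algebra ℂ B] : Set (B ⊗[ℂ] Bᵐᵒᵖ) :=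
  {t | leftContraction B t = 0 ∧ rightContraction B t = 0}

section aux

variable {B : Type*} [Ring B] [Algebra ℂ B]

@[simp] lemma leftContraction_tmul (a : B) (b : Bᵐᵒᵖ) :
    leftContraction B (a ⊗ₜ[ℂ] b) = a * b.unop := rfl

@[simp] lemma rightContraction_tmul (a : B) (b : Bᵐᵒᵖ) :
    rightContraction B (a ⊗ₜ[ℂ] b) = b.unop * a := rfl

lemma leftContraction_mul (s t : B ⊗[ℂ] Bᵐᵒᵖ) :
    leftContraction B (s * t) =
      leftContraction B (s * (leftContraction B t ⊗ₜ[ℂ] (1 : Bᵐᵒᵖ))) := by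
  induction s using TensorProduct.induction_on with
  | zero => simp
  | add x y hx hy => simp [add_mul, hx, hy]
  | tmul a b =>
    induction t using TensorProduct.induction_on with
    | zero => simp
    | add x y hx hy =>
      simp only [map_add, mul_add, TensorProduct.add_tmul] at *
      rw [hx, hy]
    | tmul c d =>
      simp [Algebra.TensorProduct.tmul_mul_tmul, mul_assoc]

lemma rightContraction_mul (s t : B ⊗[ℂ] Bᵐᵒᵖ) :
    rightContraction B (s * t) =
      rightContraction B (((1 : B) ⊗ₜ[ℂ] MulOpposite.op (rightContraction B s)) * t) := by
  induction t using TensorProduct.induction_on with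
  | zero => simp
  | add x y hx hy => simp [mul_add, hx, hy]
  | tmul c d =>
    induction s using TensorProduct.induction_on with
    | zero => simp
    | add x y hx hy =>
      simp only [map_add, add_mul, TensorProduct.tmul_add, MulOpposite.op_add] at *
      rw [hx, hy]
    | tmul a b =>
      simp [Algebra.TensorProduct.tmul_mul_tmul, mul_assoc]

end aux

/-- `N(B)` is a (non-unital) subalgebra of `B ⊗ B^op` containing the subalgebra
`T(B)` generated by all `a⊗1 - 1⊗a`. -/
theorem stmt10 (B : Type*) [Ring B] [Algebra ℂ B] :
    (∀ s t, s ∈ NLie B → t ∈ NLie B → s + t ∈ NLie B) ∧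
    (∀ (c : ℂ) t, t ∈ NLie B → c • t ∈ NLie B) ∧
    (∀ s t, s ∈ NLie B → t ∈ NLie B → s * t ∈ NLie B) ∧
    ((NonUnitalAlgebra.adjoin ℂ
        {y : B ⊗[ℂ] Bᵐᵒᵖ | ∃ a : B, y = a ⊗ₜ[ℂ] (1 : Bᵐᵒᵖ) - (1 : B) ⊗ₜ[ℂ] MulOpposite.op a} :
        Set (B ⊗[ℂ] Bᵐᵒᵖ)) ⊆ NLie B) := by
  have hadd : ∀ s t, s ∈ NLie B → t ∈ NLie B → s + t ∈ NLie B := by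
    rintro s t ⟨h1, h2⟩ ⟨h3, h4⟩
    exact ⟨by simp [h1, h3], by simp [h2, h4]⟩
  have hsmul : ∀ (c : ℂ) t, t ∈ NLie B → c • t ∈ NLie B := by
    rintro c t ⟨h1, h2⟩
    exact ⟨by simp [h1], by simp [h2]⟩
  have hmul : ∀ s t, s ∈ NLie B → t ∈ NLie B → s * t ∈ NLie B := by
    rintro s t ⟨h1, h2⟩ ⟨h3, h4⟩
    constructor
    · rw [leftContraction_mul, h3]
      simp [TensorProduct.zero_tmul]
    · rw [rightContraction_mul, h2]
      simp [TensorProduct.tmul_zero]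
  refine ⟨hadd, hsmul, hmul, ?_⟩
  let S : NonUnitalSubalgebra ℂ (B ⊗[ℂ] Bᵐᵒᵖ) :=
    { carrier := NLie B
      add_mem' := fun {s t} hs ht => hadd s t hs ht
      smul_mem' := fun c t ht => hsmul c t ht
      mul_mem' := fun {s t} hs ht => hmul s t hs ht
      zero_mem' := ⟨map_zero _, map_zero _⟩ }
  have : NonUnitalAlgebra.adjoin ℂ
      {y : B ⊗[ℂ] Bᵐᵒᵖ | ∃ a : B, y = a ⊗ₜ[ℂ] (1 : Bᵐᵒᵖ) - (1 : B) ⊗ₜ[ℂ] MulOpposite.op a}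
      ≤ S := by
    apply NonUnitalAlgebra.adjoin_le
    rintro y ⟨a, rfl⟩
    constructor <;> simp
  exact this
end

section
/- The polynomial (x₁ - y₁)x₂ in ℂ[x₁,x₂,y₁,y₂] does not belong to the subalgebra generated by all polynomials of the form a(x₁,x₂) - a(y₁,y₂), where a ranges over ℂ[x₁,x₂]. -/
set_option synthInstance.maxHeartbeats 200000
set_option maxHeartbeats 800000

open MvPolynomial TrivSqZeroExt

noncomputable abbrev R2 : Type := MvPolynomial (Fin 2) ℂ
noncomputable abbrev T : Type := TrivSqZeroExt R2 (R2 × R2)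

noncomputable instance : CommRing T := inferInstance
noncomputable instance : Algebra ℂ T := inferInstance

noncomputable def phi : MvPolynomial (Fin 4) ℂ →ₐ[ℂ] T :=
  aeval ![inl (X 0) + inr (1,0), inl (X 1) + inr (0,1), inl (X 0), inl (X 1)]

lemma mul_expand (p q : R2) (m n : R2 × R2) :
    (inl p + inr m) * (inl q + inr n) = (inl (p*q) + inr (p • n + q • m) : T) := by
  ext <;> simp [mul_comm]

lemma phi_X0 : phi (X (0:Fin 4)) = inl (X 0 : R2) + inr ((1:R2),(0:R2)) := by
  simp [phi]

lemma phi_X1 : phi (X (1:Fin 4)) = inl (X 1 : R2) + inr ((0:R2),(1:R2)) := by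
  simp [phi]

lemma phi_x (a : MvPolynomial (Fin 2) ℂ) :
    phi (aeval ![X 0, X 1] a) = inl a + inr (pderiv 0 a, pderiv 1 a) := by
  induction a using MvPolynomial.induction_on with
  | C c =>
    rw [aeval_C, AlgHom.commutes, algebraMap_eq_inl']
    simp [MvPolynomial.algebraMap_eq, Prod.mk_zero_zero]
  | add p q hp hq =>
    simp only [map_add]
    rw [hp, hq, inl_add, ← Prod.mk_add_mk, inr_add]
    abel
  | mul_X p i hp =>
    simp only [map_mul, aeval_X]
    rw [hp]
    fin_cases i <;>
      simp only [Fin.zero_eta, Fin.mk_one, Fin.isValue, Matrix.cons_val_zero, Matrix.cons_val_one,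
        Matrix.head_cons]
    · rw [phi_X0, mul_expand]
      ext <;> simp [pderiv_mul, Prod.smul_def] <;> ring
    · rw [phi_X1, mul_expand]
      ext <;> simp [pderiv_mul, Prod.smul_def] <;> ring

lemma phi_y (a : MvPolynomial (Fin 2) ℂ) :
    phi (aeval ![X 2, X 3] a) = inl a := by
  have h : (phi.comp (aeval ![X 2, X 3]) : MvPolynomial (Fin 2) ℂ →ₐ[ℂ] T)
      = inlAlgHom ℂ R2 (R2 × R2) := by
    apply MvPolynomial.algHom_ext
    intro i
    fin_cases i <;> simp [phi]
  exact DFunLike.congr_fun h a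

lemma pderiv_swap (i j : Fin 2) (p : R2) :
    pderiv i (pderiv j p) = pderiv j (pderiv i p) := by
  induction p using MvPolynomial.induction_on with
  | C c => simp [pderiv_C]
  | add p q hp hq => simp [hp, hq]
  | mul_X p k hp =>
    have d : ∀ l : Fin 2, pderiv l (X k : R2) = 0 ∨ pderiv l (X k : R2) = 1 := by
      intro l
      rcases eq_or_ne k l with rfl | h
      · right; simp
      · left; simp [h]
    rw [pderiv_mul, pderiv_mul, map_add, map_add, pderiv_mul, pderiv_mul, pderiv_mul,
      pderiv_mul, hp]
    rcases d i with hi | hi <;> rcases d j with hj | hj <;>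
      simp [hi, hj, pderiv_C, pderiv_one] <;> ring

/-- The polynomial `(x₁ - y₁)x₂ ∈ ℂ[x₁,x₂,y₁,y₂]` does not belong to the
(non-unital) subalgebra generated by all polynomials `a(x₁,x₂) - a(y₁,y₂)`, `a ∈ ℂ[x₁,x₂]`.
Here variables `0,1,2,3` of `ℂ[x₁,x₂,y₁,y₂]` are `x₁,x₂,y₁,y₂` respectively. -/
theorem stmt11 :
    (MvPolynomial.X 0 - MvPolynomial.X 2) * MvPolynomial.X 1 ∉
      NonUnitalAlgebra.adjoin ℂ
        {q : MvPolynomial (Fin 4) ℂ | ∃ a : MvPolynomial (Fin 2) ℂ,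
          q = MvPolynomial.aeval ![MvPolynomial.X 0, MvPolynomial.X 1] a -
              MvPolynomial.aeval ![MvPolynomial.X 2, MvPolynomial.X 3] a} := by
  intro hmem
  let S : NonUnitalSubalgebra ℂ T :=
    { carrier := {t | ∃ a : MvPolynomial (Fin 2) ℂ, t = inr (pderiv 0 a, pderiv 1 a)}
      add_mem' := by
        rintro x y ⟨a, rfl⟩ ⟨b, rfl⟩
        refine ⟨a + b, ?_⟩
        simp only [map_add]
        rw [← inr_add, Prod.mk_add_mk]
      mul_mem' := by
        rintro x y ⟨a, rfl⟩ ⟨b, rfl⟩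
        exact ⟨0, by simp [inr_mul_inr, Prod.mk_zero_zero]⟩
      smul_mem' := by
        rintro c x ⟨a, rfl⟩
        refine ⟨c • a, ?_⟩
        rw [Derivation.map_smul, Derivation.map_smul, ← Prod.smul_mk, inr_smul]
      zero_mem' := ⟨0, by simp [Prod.mk_zero_zero]⟩ }
  have hsub : NonUnitalAlgebra.adjoin ℂ
        {q : MvPolynomial (Fin 4) ℂ | ∃ a : MvPolynomial (Fin 2) ℂ,
          q = aeval ![X 0, X 1] a - aeval ![X 2, X 3] a}
      ≤ S.comap phi.toNonUnitalAlgHom := by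
    apply NonUnitalAlgebra.adjoin_le
    rintro q ⟨a, rfl⟩
    show phi _ ∈ S
    refine ⟨a, ?_⟩
    rw [map_sub, phi_x, phi_y]
    abel
  obtain ⟨a, ha⟩ := hsub hmem
  have ha' : phi ((X 0 - X 2) * X 1) = inr (pderiv 0 a, pderiv 1 a) := ha
  have hphi : phi ((X 0 - X 2) * X 1) = inr ((X 1 : R2), 0) := by
    have h2 : phi (X (2:Fin 4)) = inl (X 0 : R2) := by
      simpa using phi_y (X 0)
    rw [map_mul, map_sub, phi_X0, phi_X1, h2, add_sub_cancel_left]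
    ext <;> simp
  rw [hphi] at ha'
  have hpair := inr_injective ha'
  have h0 : (X 1 : R2) = pderiv 0 a := congrArg Prod.fst hpair
  have h1 : (0 : R2) = pderiv 1 a := congrArg Prod.snd hpair
  have : (1 : R2) = 0 := by
    calc (1 : R2) = pderiv 1 (X 1 : R2) := by simp
    _ = pderiv 1 (pderiv 0 a) := by rw [h0]
    _ = pderiv 0 (pderiv 1 a) := pderiv_swap _ _ _
    _ = 0 := by rw [← h1, map_zero]
  exact one_ne_zero this
end

section
/- For B = M_n(ℂ), the subalgebra T(B) of B ⊗ B^op generated by all a⊗1 - 1⊗a equals N(B) = {Σ a_i ⊗ b_i : Σ a_i b_i = 0 and Σ b_i a_i = 0}. -/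
open scoped TensorProduct
open MulOpposite Matrix

namespace Stmt15

variable (n : ℕ)

abbrev B (n : ℕ) := Matrix (Fin n) (Fin n) ℂ
abbrev A (n : ℕ) := B n ⊗[ℂ] (B n)ᵐᵒᵖ

noncomputable abbrev L (n : ℕ) : A n →ₗ[ℂ] B n := leftContraction (B n)
noncomputable abbrev R (n : ℕ) : A n →ₗ[ℂ] B n := rightContraction (B n)

@[simp] lemma L_tmul (a : B n) (b : (B n)ᵐᵒᵖ) : L n (a ⊗ₜ b) = a * unop b := by
  simp [leftContraction]

@[simp] lemma R_tmul (a : B n) (b : (B n)ᵐᵒᵖ) : R n (a ⊗ₜ b) = unop b * a := by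
  simp [rightContraction]

/-- the swap anti-automorphism (as a linear map) -/
noncomputable def σ : A n →ₗ[ℂ] A n :=
  TensorProduct.lift (LinearMap.mk₂ ℂ (fun a b => unop b ⊗ₜ op a)
    (by intros; simp [TensorProduct.tmul_add, op_add])
    (by intros; simp [TensorProduct.tmul_smul, op_smul])
    (by intros; simp [TensorProduct.add_tmul])
    (by intros; simp [TensorProduct.smul_tmul, TensorProduct.tmul_smul]))

@[simp] lemma σ_tmul (a : B n) (b : (B n)ᵐᵒᵖ) : σ n (a ⊗ₜ b) = unop b ⊗ₜ op a := rfl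

lemma σ_mul (x y : A n) : σ n (x * y) = σ n y * σ n x := by
  induction x using TensorProduct.induction_on with
  | zero => simp
  | tmul a b =>
    induction y using TensorProduct.induction_on with
    | zero => simp
    | tmul c d => simp [Algebra.TensorProduct.tmul_mul_tmul]
    | add u v hu hv => rw [mul_add, map_add, hu, hv, map_add, add_mul]
  | add u v hu hv => rw [add_mul, map_add, hu, hv, map_add, mul_add]

/-- the subalgebra T -/
noncomputable def T (n : ℕ) : NonUnitalSubalgebra ℂ (A n) :=
  NonUnitalAlgebra.adjoin ℂ
    {y : A n | ∃ a : B n, y = a ⊗ₜ[ℂ] (1 : (B n)ᵐᵒᵖ) - (1 : B n) ⊗ₜ[ℂ] op a}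

lemma delta_mem (a : B n) : a ⊗ₜ[ℂ] (1 : (B n)ᵐᵒᵖ) - (1 : B n) ⊗ₜ[ℂ] op a ∈ T n :=
  NonUnitalAlgebra.subset_adjoin ℂ ⟨a, rfl⟩

lemma L_tmul_mul (a : B n) (b : (B n)ᵐᵒᵖ) (x : A n) :
    L n ((a ⊗ₜ b) * x) = a * L n x * unop b := by
  induction x using TensorProduct.induction_on with
  | zero => simp
  | tmul c d => simp [Algebra.TensorProduct.tmul_mul_tmul, mul_assoc]
  | add u v hu hv => rw [mul_add, map_add, hu, hv, map_add]; noncomm_ring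

lemma R_mul_tmul (a : B n) (b : (B n)ᵐᵒᵖ) (x : A n) :
    R n (x * (a ⊗ₜ b)) = unop b * R n x * a := by
  induction x using TensorProduct.induction_on with
  | zero => simp
  | tmul c d => simp [Algebra.TensorProduct.tmul_mul_tmul, mul_assoc]
  | add u v hu hv => rw [add_mul, map_add, hu, hv, map_add]; noncomm_ring

lemma L_mul_of_right (x y : A n) (hy : L n y = 0) : L n (x * y) = 0 := by
  induction x using TensorProduct.induction_on with
  | zero => simp
  | tmul a b => rw [L_tmul_mul, hy, mul_zero, zero_mul]
  | add u v hu hv => rw [add_mul, map_add, hu, hv, add_zero]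

lemma R_mul_of_left (x y : A n) (hx : R n x = 0) : R n (x * y) = 0 := by
  induction y using TensorProduct.induction_on with
  | zero => simp
  | tmul a b => rw [R_mul_tmul, hx, mul_zero, zero_mul]
  | add u v hu hv => rw [mul_add, map_add, hu, hv, add_zero]

/-- N as a non-unital subalgebra -/
noncomputable def NSub (n : ℕ) : NonUnitalSubalgebra ℂ (A n) where
  carrier := {x | L n x = 0 ∧ R n x = 0}
  add_mem' := by
    rintro x y ⟨h1, h2⟩ ⟨h3, h4⟩
    exact ⟨by rw [map_add, h1, h3, add_zero], by rw [map_add, h2, h4, add_zero]⟩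
  zero_mem' := ⟨map_zero _, map_zero _⟩
  smul_mem' := by
    rintro r x ⟨h1, h2⟩
    exact ⟨by rw [_root_.map_smul, h1, smul_zero], by rw [_root_.map_smul, h2, smul_zero]⟩
  mul_mem' := by
    rintro x y ⟨hx1, hx2⟩ ⟨hy1, hy2⟩
    exact ⟨L_mul_of_right n x y hy1, R_mul_of_left n x y hx2⟩

lemma T_sub_N : ∀ x ∈ T n, L n x = 0 ∧ R n x = 0 := by
  intro x hx
  refine NonUnitalAlgebra.adjoin_le (S := NSub n) ?_ hx
  rintro y ⟨a, rfl⟩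
  constructor
  · rw [map_sub]; simp
  · rw [map_sub]; simp

/-- matrix units -/
noncomputable def e (n : ℕ) (i j : Fin n) : B n := single i j 1

/-- the Casimir-like element -/
noncomputable def c (n : ℕ) : A n := ∑ k : Fin n, ∑ l : Fin n, e n k l ⊗ₜ[ℂ] op (e n l k)

lemma e_mul (a : B n) (k l : Fin n) : e n k l * a = ∑ j, a l j • e n k j := by
  ext p q
  simp only [e, mul_apply, single, of_apply, Matrix.sum_apply, Matrix.smul_apply,
    smul_eq_mul, ite_mul, mul_ite, one_mul, zero_mul, mul_one, mul_zero, ite_and]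
  by_cases h : k = p <;> simp [h]

lemma mul_e (a : B n) (k l : Fin n) : a * e n k l = ∑ i, a i k • e n i l := by
  ext p q
  simp only [e, mul_apply, single, of_apply, Matrix.sum_apply, Matrix.smul_apply,
    smul_eq_mul, ite_mul, mul_ite, one_mul, zero_mul, mul_one, mul_zero, ite_and]
  by_cases h : l = q <;> simp [h]

lemma e_mul_mul_e (a : B n) (k l p q : Fin n) : e n k l * a * e n p q = a l p • e n k q := by
  rw [e_mul, Finset.sum_mul, Finset.sum_eq_single p]
  · rw [smul_mul_assoc]
    congr 1
    simp [e]
  · intro j _ hj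
    rw [smul_mul_assoc, e, e, single_mul_single_of_ne (h := hj), smul_zero]
  · simp

lemma e_mul_e_same (q p k : Fin n) : e n q p * e n p k = e n q k := by
  rw [e, e, e, single_mul_single_same, one_mul]

lemma e_mul_e_of_ne {p l : Fin n} (h : p ≠ l) (q k : Fin n) : e n q p * e n l k = 0 := by
  rw [e, e, single_mul_single_of_ne (h := h)]

lemma sum_e_diag : ∑ k, e n k k = 1 := by
  ext p q
  simp only [e, single, of_apply, Matrix.sum_apply, one_apply, ite_and]
  by_cases h : p = q <;> simp [h]

lemma sum_e_mul_e (y : B n) :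
    ∑ k : Fin n, ∑ l : Fin n, e n k l * y * e n l k = Matrix.trace y • (1 : B n) := by
  have hy : ∀ k l, e n k l * y * e n l k = y l l • e n k k := by
    intro k l
    rw [e_mul_mul_e]
  simp_rw [hy]
  rw [← sum_e_diag n, Finset.smul_sum]
  refine Finset.sum_congr rfl fun k _ => ?_
  rw [← Finset.sum_smul]
  congr 1

lemma sum_rot {M : Type*} [AddCommMonoid M] (f : Fin n → Fin n → Fin n → M) :
    ∑ k, ∑ l, ∑ i, f i l k = ∑ k, ∑ l, ∑ i, f k l i := by
  have h1 : ∀ k, ∑ l, ∑ i, f i l k = ∑ i, ∑ l, f i l k := fun k => Finset.sum_comm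
  simp_rw [h1]
  conv_lhs => rw [Finset.sum_comm]
  exact Finset.sum_congr rfl fun k _ => Finset.sum_comm

lemma C1 (a : B n) : (a ⊗ₜ[ℂ] (1 : (B n)ᵐᵒᵖ)) * c n = ((1 : B n) ⊗ₜ[ℂ] op a) * c n := by
  rw [c]
  simp_rw [Finset.mul_sum]
  simp_rw [Algebra.TensorProduct.tmul_mul_tmul]
  simp_rw [one_mul]
  simp_rw [← op_mul]
  simp_rw [mul_e n a, e_mul n a]
  simp_rw [TensorProduct.sum_tmul]
  simp_rw [Finset.op_sum, op_smul, TensorProduct.tmul_sum, TensorProduct.tmul_smul,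
    TensorProduct.smul_tmul']
  exact sum_rot n (fun i l k => (a i k • e n i l) ⊗ₜ[ℂ] op (e n l k))

lemma C2 (a : B n) : c n * (a ⊗ₜ[ℂ] (1 : (B n)ᵐᵒᵖ)) = c n * ((1 : B n) ⊗ₜ[ℂ] op a) := by
  rw [c]
  simp_rw [Finset.sum_mul]
  simp_rw [Algebra.TensorProduct.tmul_mul_tmul]
  simp_rw [mul_one]
  simp_rw [← op_mul]
  simp_rw [mul_e n a, e_mul n a]
  simp_rw [TensorProduct.sum_tmul]
  simp_rw [Finset.op_sum, op_smul, TensorProduct.tmul_sum, TensorProduct.tmul_smul,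
    TensorProduct.smul_tmul']
  refine Finset.sum_congr rfl fun k _ => Finset.sum_comm

lemma c_mul_tmul (a : B n) :
    c n * (a ⊗ₜ[ℂ] (1 : (B n)ᵐᵒᵖ)) = ∑ k : Fin n, ∑ l : Fin n,
      (e n k l * a) ⊗ₜ[ℂ] op (e n l k) := by
  rw [c]
  simp_rw [Finset.sum_mul, Algebra.TensorProduct.tmul_mul_tmul, mul_one]

lemma C3 (a : B n) :
    c n * (a ⊗ₜ[ℂ] (1 : (B n)ᵐᵒᵖ)) * c n = Matrix.trace a • c n := by
  rw [c_mul_tmul]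
  rw [c]
  simp_rw [Finset.sum_mul, Finset.mul_sum]
  simp_rw [Algebra.TensorProduct.tmul_mul_tmul, ← op_mul]
  have collapse : ∀ k l : Fin n,
      (∑ p : Fin n, ∑ q : Fin n, (e n k l * a * e n p q) ⊗ₜ[ℂ] op (e n q p * e n l k))
        = ∑ q : Fin n, (a l l • e n k q) ⊗ₜ[ℂ] op (e n q k) := by
    intro k l
    rw [Finset.sum_eq_single l]
    · refine Finset.sum_congr rfl fun q _ => ?_
      rw [e_mul_mul_e, e_mul_e_same]
    · intro p _ hp
      refine Finset.sum_eq_zero fun q _ => ?_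
      rw [e_mul_e_of_ne n hp]
      simp
    · simp
  simp_rw [collapse]
  rw [Finset.smul_sum]
  refine Finset.sum_congr rfl fun k _ => ?_
  rw [Finset.smul_sum, Finset.sum_comm]
  refine Finset.sum_congr rfl fun q _ => ?_
  simp_rw [← TensorProduct.smul_tmul']
  rw [← Finset.sum_smul]
  congr 1

lemma σ_c : σ n (c n) = c n := by
  rw [c, map_sum]
  simp_rw [map_sum, σ_tmul, unop_op]
  exact Finset.sum_comm

lemma c_mul_eq (x : A n) : c n * x = c n * ((1 : B n) ⊗ₜ[ℂ] op (R n x)) := by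
  induction x using TensorProduct.induction_on with
  | zero => simp
  | tmul a b =>
    have h : a ⊗ₜ[ℂ] b = (a ⊗ₜ[ℂ] (1 : (B n)ᵐᵒᵖ)) * ((1 : B n) ⊗ₜ[ℂ] b) := by
      rw [Algebra.TensorProduct.tmul_mul_tmul, mul_one, one_mul]
    rw [R_tmul]
    conv_lhs => rw [h]
    rw [← mul_assoc, C2, mul_assoc, Algebra.TensorProduct.tmul_mul_tmul, one_mul]
    rfl
  | add u v hu hv =>
    rw [mul_add, hu, hv, map_add, op_add, TensorProduct.tmul_add, mul_add]

lemma mul_c_eq (x : A n) : x * c n = ((L n x) ⊗ₜ[ℂ] (1 : (B n)ᵐᵒᵖ)) * c n := by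
  induction x using TensorProduct.induction_on with
  | zero => simp
  | tmul a b =>
    have h : a ⊗ₜ[ℂ] b = (a ⊗ₜ[ℂ] (1 : (B n)ᵐᵒᵖ)) * ((1 : B n) ⊗ₜ[ℂ] b) := by
      rw [Algebra.TensorProduct.tmul_mul_tmul, mul_one, one_mul]
    rw [L_tmul]
    conv_lhs => rw [h]
    rw [mul_assoc, show ((1 : B n) ⊗ₜ[ℂ] b) * c n = ((unop b) ⊗ₜ[ℂ] (1:(B n)ᵐᵒᵖ)) * c n from
      by rw [C1, op_unop], ← mul_assoc, Algebra.TensorProduct.tmul_mul_tmul, mul_one]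
  | add u v hu hv =>
    rw [add_mul, hu, hv, map_add, TensorProduct.add_tmul, add_mul]

/-- rank one elements -/
noncomputable def m (y z : B n) : A n :=
  (z ⊗ₜ[ℂ] (1 : (B n)ᵐᵒᵖ)) * c n * (y ⊗ₜ[ℂ] (1 : (B n)ᵐᵒᵖ))

lemma m_one_right (y : B n) : m n y 1 = c n * (y ⊗ₜ[ℂ] (1 : (B n)ᵐᵒᵖ)) := by
  rw [m, ← Algebra.TensorProduct.one_def, one_mul]

lemma m_one_left (z : B n) : m n 1 z = (z ⊗ₜ[ℂ] (1 : (B n)ᵐᵒᵖ)) * c n := by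
  rw [m, ← Algebra.TensorProduct.one_def, mul_one]

lemma m_one_one : m n 1 1 = c n := by
  rw [m_one_right, ← Algebra.TensorProduct.one_def, mul_one]

lemma m_add_fst (y y' z : B n) : m n (y + y') z = m n y z + m n y' z := by
  rw [m, m, m, TensorProduct.add_tmul, mul_add]

lemma m_add_snd (y z z' : B n) : m n y (z + z') = m n y z + m n y z' := by
  rw [m, m, m, TensorProduct.add_tmul, add_mul, add_mul]

lemma m_sub_fst (y y' z : B n) : m n (y - y') z = m n y z - m n y' z := by
  rw [m, m, m, TensorProduct.sub_tmul, mul_sub]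

lemma m_sub_snd (y z z' : B n) : m n y (z - z') = m n y z - m n y z' := by
  rw [m, m, m, TensorProduct.sub_tmul, sub_mul, sub_mul]

lemma m_smul_fst (r : ℂ) (y z : B n) : m n (r • y) z = r • m n y z := by
  rw [m, m, ← TensorProduct.smul_tmul', mul_smul_comm]

lemma m_smul_snd (r : ℂ) (y z : B n) : m n y (r • z) = r • m n y z := by
  rw [m, m, ← TensorProduct.smul_tmul', smul_mul_assoc, smul_mul_assoc]

lemma m_zero_fst (z : B n) : m n 0 z = 0 := by
  rw [m, TensorProduct.zero_tmul, mul_zero]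

lemma tmul_c (z : B n) :
    (z ⊗ₜ[ℂ] (1 : (B n)ᵐᵒᵖ)) * c n = ∑ k : Fin n, ∑ l : Fin n,
      (z * e n k l) ⊗ₜ[ℂ] op (e n l k) := by
  rw [c]
  simp_rw [Finset.mul_sum, Algebra.TensorProduct.tmul_mul_tmul, one_mul]

lemma L_m (y z : B n) : L n (m n y z) = Matrix.trace y • z := by
  rw [m, mul_assoc, L_tmul_mul, c_mul_tmul, map_sum]
  simp_rw [map_sum, L_tmul, unop_op, unop_one, mul_one]
  rw [sum_e_mul_e, mul_smul_comm, mul_one]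

lemma R_m (y z : B n) : R n (m n y z) = Matrix.trace z • y := by
  rw [m, R_mul_tmul, unop_one, one_mul, tmul_c, map_sum]
  simp_rw [map_sum, R_tmul, unop_op]
  simp_rw [← mul_assoc]
  rw [Finset.sum_comm, sum_e_mul_e, smul_mul_assoc, one_mul]

lemma σ_m (y z : B n) : σ n (m n y z) = m n z y := by
  rw [m, σ_mul, σ_mul, σ_c, σ_tmul, σ_tmul, unop_one, ← C2, ← mul_assoc, ← C1, m]

lemma m_mul_m (y z y' z' : B n) :
    m n y z * m n y' z' = Matrix.trace (y * z') • m n y' z := by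
  rw [m, m, m]
  have h1 : (y ⊗ₜ[ℂ] (1:(B n)ᵐᵒᵖ)) * (z' ⊗ₜ[ℂ] (1:(B n)ᵐᵒᵖ)) = (y * z') ⊗ₜ[ℂ] (1:(B n)ᵐᵒᵖ) := by
    rw [Algebra.TensorProduct.tmul_mul_tmul, mul_one]
  simp only [← mul_assoc]
  rw [mul_assoc (z ⊗ₜ[ℂ] (1:(B n)ᵐᵒᵖ) * c n) (y ⊗ₜ[ℂ] (1:(B n)ᵐᵒᵖ)) (z' ⊗ₜ[ℂ] (1:(B n)ᵐᵒᵖ)),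
    h1]
  rw [mul_assoc (z ⊗ₜ[ℂ] (1:(B n)ᵐᵒᵖ)) (c n) ((y * z') ⊗ₜ[ℂ] (1:(B n)ᵐᵒᵖ))]
  rw [mul_assoc (z ⊗ₜ[ℂ] (1:(B n)ᵐᵒᵖ)) (c n * ((y * z') ⊗ₜ[ℂ] (1:(B n)ᵐᵒᵖ))) (c n)]
  rw [C3, mul_smul_comm, smul_mul_assoc]

lemma tmul_e_eq_m (i j k l : Fin n) :
    e n i j ⊗ₜ[ℂ] op (e n k l) = m n (e n k j) (e n i l) := by
  symm
  rw [m, tmul_c]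
  have h2 : (∑ p : Fin n, ∑ q : Fin n, (e n i l * e n p q) ⊗ₜ[ℂ] op (e n q p))
      = ∑ q : Fin n, (e n i q) ⊗ₜ[ℂ] op (e n q l) := by
    rw [Finset.sum_eq_single l]
    · exact Finset.sum_congr rfl fun q _ => by rw [e_mul_e_same]
    · intro p _ hp
      exact Finset.sum_eq_zero fun q _ => by
        rw [e_mul_e_of_ne n (Ne.symm hp), TensorProduct.zero_tmul]
    · simp
  rw [h2, Finset.sum_mul]
  simp_rw [Algebra.TensorProduct.tmul_mul_tmul, mul_one]
  rw [Finset.sum_eq_single k]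
  · rw [e_mul_e_same]
  · intro q _ hq
    rw [e_mul_e_of_ne n hq, TensorProduct.zero_tmul]
  · simp

/-- the map whose values always lie in T -/
noncomputable def Qmap (n : ℕ) : A n →ₗ[ℂ] A n :=
  LinearMap.id + σ n - ((TensorProduct.mk ℂ (B n) ((B n)ᵐᵒᵖ)).flip 1).comp (R n)
    - ((TensorProduct.mk ℂ (B n) ((B n)ᵐᵒᵖ) 1).comp (opLinearEquiv ℂ).toLinearMap).comp (L n)

lemma Qmap_apply (x : A n) :
    Qmap n x = x + σ n x - (R n x) ⊗ₜ[ℂ] (1 : (B n)ᵐᵒᵖ) - (1 : B n) ⊗ₜ[ℂ] op (L n x) := rfl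

lemma Qmap_mem (x : A n) : Qmap n x ∈ T n := by
  have key : (⊤ : Submodule ℂ (A n)) ≤ Submodule.comap (Qmap n) (T n).toSubmodule := by
    rw [← TensorProduct.span_tmul_eq_top ℂ (B n) ((B n)ᵐᵒᵖ), Submodule.span_le]
    rintro _ ⟨a, b, rfl⟩
    rw [SetLike.mem_coe, Submodule.mem_comap]
    have hq : Qmap n (a ⊗ₜ[ℂ] b) =
        -(((unop b) ⊗ₜ[ℂ] (1 : (B n)ᵐᵒᵖ) - (1 : B n) ⊗ₜ[ℂ] op (unop b)) *
          (a ⊗ₜ[ℂ] (1 : (B n)ᵐᵒᵖ) - (1 : B n) ⊗ₜ[ℂ] op a)) := by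
      rw [Qmap_apply, σ_tmul, R_tmul, L_tmul]
      conv_lhs => rw [← op_unop b]
      simp only [sub_mul, mul_sub, Algebra.TensorProduct.tmul_mul_tmul, one_mul, mul_one,
        ← op_mul]
      simp only [unop_op]
      abel
    show Qmap n (a ⊗ₜ[ℂ] b) ∈ T n
    rw [hq]
    exact neg_mem (mul_mem (delta_mem n (unop b)) (delta_mem n a))
  have := key (Submodule.mem_top (x := x))
  rwa [Submodule.mem_comap] at this

lemma m_sym_mem (y z : B n) (hy : Matrix.trace y = 0) (hz : Matrix.trace z = 0) :
    m n y z + m n z y ∈ T n := by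
  have h := Qmap_mem n (m n y z)
  rw [Qmap_apply, σ_m, L_m, R_m, hy, hz, zero_smul, zero_smul] at h
  simpa using h

lemma m_diag_mem (z : B n) (hz : Matrix.trace z = 0) : m n z z ∈ T n := by
  have h := m_sym_mem n z z hz hz
  have h2 : m n z z = (2⁻¹ : ℂ) • (m n z z + m n z z) := by
    rw [← two_smul ℂ, smul_smul]
    norm_num
  rw [h2]
  exact SMulMemClass.smul_mem _ h

lemma D_mem_of_ne (b c₀ : B n) (hb : Matrix.trace b = 0) (hc : Matrix.trace c₀ = 0)
    (h : Matrix.trace (c₀ * c₀) ≠ 0) : m n c₀ b - m n b c₀ ∈ T n := by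
  have hX : (m n c₀ b + m n b c₀) * m n c₀ c₀ ∈ T n :=
    mul_mem (m_sym_mem n c₀ b hc hb) (m_diag_mem n c₀ hc)
  have hY : m n c₀ c₀ * (m n c₀ b + m n b c₀) ∈ T n :=
    mul_mem (m_diag_mem n c₀ hc) (m_sym_mem n c₀ b hc hb)
  have eX : (m n c₀ b + m n b c₀) * m n c₀ c₀
      = Matrix.trace (c₀ * c₀) • m n c₀ b + Matrix.trace (b * c₀) • m n c₀ c₀ := by
    rw [add_mul, m_mul_m, m_mul_m]
  have eY : m n c₀ c₀ * (m n c₀ b + m n b c₀)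
      = Matrix.trace (c₀ * b) • m n c₀ c₀ + Matrix.trace (c₀ * c₀) • m n b c₀ := by
    rw [mul_add, m_mul_m, m_mul_m]
  have key : Matrix.trace (c₀ * c₀) • (m n c₀ b - m n b c₀)
      = (m n c₀ b + m n b c₀) * m n c₀ c₀ - m n c₀ c₀ * (m n c₀ b + m n b c₀) := by
    rw [eX, eY, Matrix.trace_mul_comm b c₀, smul_sub]
    abel
  have h2 : m n c₀ b - m n b c₀
      = (Matrix.trace (c₀ * c₀))⁻¹ • (Matrix.trace (c₀ * c₀) • (m n c₀ b - m n b c₀)) := by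
    rw [smul_smul, inv_mul_cancel₀ h, one_smul]
  rw [h2, key]
  exact SMulMemClass.smul_mem _ (sub_mem hX hY)

lemma D_mem (hn : 2 ≤ n) (b c₀ : B n) (hb : Matrix.trace b = 0)
    (hc : Matrix.trace c₀ = 0) : m n c₀ b - m n b c₀ ∈ T n := by
  have h01 : ((⟨0, by omega⟩ : Fin n) : Fin n) ≠ (⟨1, by omega⟩ : Fin n) := by
    simp [Fin.ext_iff]
  set u : Fin n := ⟨0, by omega⟩ with hu
  set v : Fin n := ⟨1, by omega⟩ with hv
  set c' : B n := e n u v + e n v u with hc'def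
  have htrc' : Matrix.trace c' = 0 := by
    rw [hc'def, Matrix.trace_add, e, e, trace_single_eq_of_ne _ _ _ h01,
      trace_single_eq_of_ne _ _ _ (Ne.symm h01), add_zero]
  have hcc' : Matrix.trace (c' * c') = 2 := by
    rw [hc'def, add_mul, mul_add, mul_add, e_mul_e_of_ne n (Ne.symm h01),
      e_mul_e_of_ne n h01, e_mul_e_same, e_mul_e_same]
    rw [zero_add, add_zero]
    rw [Matrix.trace_add, e, e, trace_single_eq_same, trace_single_eq_same]
    norm_num
  have tr_expand : ∀ lam : ℂ, Matrix.trace ((c₀ + lam • c') * (c₀ + lam • c'))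
      = Matrix.trace (c₀ * c₀) + lam * Matrix.trace (c₀ * c') + lam * Matrix.trace (c' * c₀)
        + lam * lam * Matrix.trace (c' * c') := by
    intro lam
    rw [add_mul, mul_add, mul_add, Matrix.trace_add, Matrix.trace_add, Matrix.trace_add]
    rw [Matrix.mul_smul, Matrix.smul_mul, Matrix.smul_mul, Matrix.mul_smul]
    rw [Matrix.trace_smul, Matrix.trace_smul, Matrix.trace_smul, Matrix.trace_smul]
    simp only [smul_eq_mul, smul_smul]
    ring
  obtain ⟨lam, hlam⟩ : ∃ lam : ℂ,
      Matrix.trace ((c₀ + lam • c') * (c₀ + lam • c')) ≠ 0 := by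
    by_cases h0 : Matrix.trace (c₀ * c₀) ≠ 0
    · refine ⟨0, ?_⟩
      rw [tr_expand]
      simpa using h0
    push_neg at h0
    by_cases h1 : Matrix.trace ((c₀ + (1:ℂ) • c') * (c₀ + (1:ℂ) • c')) ≠ 0
    · exact ⟨1, h1⟩
    push_neg at h1
    refine ⟨-1, ?_⟩
    rw [tr_expand] at h1 ⊢
    rw [h0, hcc'] at h1 ⊢
    rw [Matrix.trace_mul_comm c' c₀] at h1 ⊢
    intro hm
    have : (4 : ℂ) = 0 := by linear_combination h1 + hm
    norm_num at this
  have htr : Matrix.trace (c₀ + lam • c') = 0 := by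
    rw [Matrix.trace_add, Matrix.trace_smul, hc, htrc', smul_zero, add_zero]
  have h1 : m n (c₀ + lam • c') b - m n b (c₀ + lam • c') ∈ T n :=
    D_mem_of_ne n b (c₀ + lam • c') hb htr hlam
  have h2 : m n c' b - m n b c' ∈ T n := by
    refine D_mem_of_ne n b c' hb htrc' ?_
    rw [hcc']
    norm_num
  have expand : m n c₀ b - m n b c₀
      = (m n (c₀ + lam • c') b - m n b (c₀ + lam • c')) - lam • (m n c' b - m n b c') := by
    rw [m_add_fst, m_add_snd, m_smul_fst, m_smul_snd, smul_sub]
    abel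
  rw [expand]
  exact sub_mem h1 (SMulMemClass.smul_mem _ h2)

lemma m_mem (y z : B n) (hy : Matrix.trace y = 0) (hz : Matrix.trace z = 0) :
    m n y z ∈ T n := by
  by_cases hn : 2 ≤ n
  · have hsym := m_sym_mem n y z hy hz
    have hD := D_mem n hn z y hz hy
    have h2 : m n y z = (2⁻¹ : ℂ) • ((m n y z + m n z y) + (m n y z - m n z y)) := by
      have h3 : (m n y z + m n z y) + (m n y z - m n z y) = (2:ℂ) • m n y z := by
        rw [two_smul]
        abel
      rw [h3, smul_smul]
      norm_num
    rw [h2]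
    exact SMulMemClass.smul_mem _ (add_mem hsym hD)
  · have hy0 : y = 0 := by
      ext i j
      have hij : i = j := Fin.ext (by omega)
      subst hij
      have htr : Matrix.trace y = y i i := by
        rw [Matrix.trace, Finset.sum_eq_single i]
        · rfl
        · intro k _ hk
          exact absurd (Fin.ext (by omega)) hk
        · simp
      rw [← htr, hy]
      rfl
    rw [hy0, m_zero_fst]
    exact zero_mem _

lemma cm (y z : B n) : c n * m n y z = Matrix.trace z • m n y 1 := by
  rw [m]
  simp only [← mul_assoc]
  rw [C3, smul_mul_assoc, ← m_one_right]

lemma mc (y z : B n) : m n y z * c n = Matrix.trace y • m n 1 z := by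
  rw [m]
  rw [mul_assoc (z ⊗ₜ[ℂ] (1:(B n)ᵐᵒᵖ)) (c n) (y ⊗ₜ[ℂ] (1:(B n)ᵐᵒᵖ))]
  rw [mul_assoc (z ⊗ₜ[ℂ] (1:(B n)ᵐᵒᵖ)) (c n * (y ⊗ₜ[ℂ] (1:(B n)ᵐᵒᵖ))) (c n)]
  rw [C3, mul_smul_comm, ← m_one_left]

lemma pmp (s : ℂ) (y z : B n) :
    ((1:A n) - s • c n) * m n y z * ((1:A n) - s • c n)
      = m n (y - (s * Matrix.trace y) • 1) (z - (s * Matrix.trace z) • 1) := by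
  have e1 : ((1:A n) - s • c n) * m n y z = m n y z - (s * Matrix.trace z) • m n y 1 := by
    rw [sub_mul, one_mul, smul_mul_assoc, cm, smul_smul]
  have e2 : ∀ u w : B n, m n u w * ((1:A n) - s • c n)
      = m n u w - (s * Matrix.trace u) • m n 1 w := by
    intro u w
    rw [mul_sub, mul_one, mul_smul_comm, mc, smul_smul]
  rw [e1, sub_mul, e2 y z, smul_mul_assoc, e2 y 1]
  rw [m_sub_fst, m_smul_fst, m_sub_snd, m_smul_snd, m_sub_snd, m_smul_snd]
  module

lemma tmul_expand (a : B n) (b : (B n)ᵐᵒᵖ) :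
    a ⊗ₜ[ℂ] b = ∑ i : Fin n, ∑ j : Fin n, ∑ k : Fin n, ∑ l : Fin n,
      (a i j * (unop b) k l) • m n (e n k j) (e n i l) := by
  have ha : ∀ M : B n, M = ∑ i, ∑ j, M i j • e n i j := by
    intro M
    conv_lhs => rw [matrix_eq_sum_single M]
    refine Finset.sum_congr rfl fun i _ => Finset.sum_congr rfl fun j _ => ?_
    rw [e, smul_single, smul_eq_mul, mul_one]
  have hb : ∀ M : B n, (op M : (B n)ᵐᵒᵖ) = ∑ k, ∑ l, M k l • op (e n k l) := by
    intro M
    conv_lhs => rw [ha M]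
    rw [Finset.op_sum]
    refine Finset.sum_congr rfl fun k _ => ?_
    rw [Finset.op_sum]
    exact Finset.sum_congr rfl fun l _ => by rw [op_smul]
  conv_lhs => rw [ha a, ← op_unop b, hb (unop b)]
  rw [TensorProduct.sum_tmul]
  refine Finset.sum_congr rfl fun i _ => ?_
  rw [TensorProduct.sum_tmul]
  refine Finset.sum_congr rfl fun j _ => ?_
  rw [TensorProduct.tmul_sum]
  refine Finset.sum_congr rfl fun k _ => ?_
  rw [TensorProduct.tmul_sum]
  refine Finset.sum_congr rfl fun l _ => ?_
  rw [TensorProduct.tmul_smul, ← TensorProduct.smul_tmul', smul_smul,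
    mul_comm (unop b k l) (a i j), tmul_e_eq_m]

set_option maxHeartbeats 1000000 in
theorem N_sub_T (x : A n) (hL : L n x = 0) (hR : R n x = 0) : x ∈ T n := by
  rcases Nat.eq_zero_or_pos n with hn0 | hn1
  · subst hn0
    have h1 : (1 : B 0) = 0 := by
      ext i j
      exact i.elim0
    have h2 : (1 : A 0) = 0 := by
      rw [Algebra.TensorProduct.one_def, h1, TensorProduct.zero_tmul]
    have hx : x = 0 := by rw [← one_mul x, h2, zero_mul]
    rw [hx]
    exact zero_mem _
  · set s : ℂ := (n : ℂ)⁻¹ with hs_def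
    have hn' : (n : ℂ) ≠ 0 := Nat.cast_ne_zero.2 (by omega)
    have hs : s * (n : ℂ) = 1 := inv_mul_cancel₀ hn'
    have hcx : c n * x = 0 := by
      rw [c_mul_eq, hR]
      simp
    have hxc : x * c n = 0 := by
      rw [mul_c_eq, hL]
      simp
    have hfix : ((1:A n) - s • c n) * x * ((1:A n) - s • c n) = x := by
      rw [sub_mul, one_mul, smul_mul_assoc, hcx, smul_zero, sub_zero, mul_sub, mul_one,
        mul_smul_comm, hxc, smul_zero, sub_zero]
    set M : Set (A n) :=
      {w | ∃ y z : B n, Matrix.trace y = 0 ∧ Matrix.trace z = 0 ∧ w = m n y z} with hM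
    have htr_pi : ∀ u : B n, Matrix.trace (u - (s * Matrix.trace u) • (1 : B n)) = 0 := by
      intro u
      rw [Matrix.trace_sub, Matrix.trace_smul, Matrix.trace_one]
      simp only [Fintype.card_fin, smul_eq_mul]
      rw [mul_comm s, mul_assoc, hs, mul_one, sub_self]
    have hspan : ∀ w : A n,
        ((1:A n) - s • c n) * w * ((1:A n) - s • c n) ∈ Submodule.span ℂ M := by
      intro w
      let P : A n →ₗ[ℂ] A n := (LinearMap.mulRight ℂ ((1:A n) - s • c n)).comp
        (LinearMap.mulLeft ℂ ((1:A n) - s • c n))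
      have hP : ∀ w : A n, P w = ((1:A n) - s • c n) * w * ((1:A n) - s • c n) := fun _ => rfl
      have key : (⊤ : Submodule ℂ (A n)) ≤ Submodule.comap P (Submodule.span ℂ M) := by
        rw [← TensorProduct.span_tmul_eq_top ℂ (B n) ((B n)ᵐᵒᵖ), Submodule.span_le]
        rintro _ ⟨a, b, rfl⟩
        rw [SetLike.mem_coe, Submodule.mem_comap, hP, tmul_expand]
        rw [Finset.mul_sum, Finset.sum_mul]
        refine Submodule.sum_mem _ fun i _ => ?_
        rw [Finset.mul_sum, Finset.sum_mul]
        refine Submodule.sum_mem _ fun j _ => ?_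
        rw [Finset.mul_sum, Finset.sum_mul]
        refine Submodule.sum_mem _ fun k _ => ?_
        rw [Finset.mul_sum, Finset.sum_mul]
        refine Submodule.sum_mem _ fun l _ => ?_
        rw [mul_smul_comm, smul_mul_assoc]
        refine Submodule.smul_mem _ _ ?_
        rw [pmp]
        exact Submodule.subset_span
          ⟨_, _, htr_pi (e n k j), htr_pi (e n i l), rfl⟩
      have := key (Submodule.mem_top (x := w))
      rwa [Submodule.mem_comap, hP] at this
    have hsub : Submodule.span ℂ M ≤ (T n).toSubmodule := by
      rw [Submodule.span_le]
      rintro _ ⟨y, z, hy, hz, rfl⟩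
      exact m_mem n y z hy hz
    have hx : x ∈ Submodule.span ℂ M := by
      rw [← hfix]
      exact hspan x
    exact hsub hx

end Stmt15

/-- For `B = M_n(ℂ)`, the subalgebra `T(B)` of `B ⊗ B^op` generated by all
`a⊗1 - 1⊗a` equals `N(B) = {Σ aᵢ⊗bᵢ : Σ aᵢbᵢ = 0 and Σ bᵢaᵢ = 0}`. -/
theorem stmt15 (n : ℕ) :
    ((NonUnitalAlgebra.adjoin ℂ
        {y : Matrix (Fin n) (Fin n) ℂ ⊗[ℂ] (Matrix (Fin n) (Fin n) ℂ)ᵐᵒᵖ |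
          ∃ a : Matrix (Fin n) (Fin n) ℂ,
            y = a ⊗ₜ[ℂ] (1 : (Matrix (Fin n) (Fin n) ℂ)ᵐᵒᵖ) -
                (1 : Matrix (Fin n) (Fin n) ℂ) ⊗ₜ[ℂ] MulOpposite.op a} :
        Set (Matrix (Fin n) (Fin n) ℂ ⊗[ℂ] (Matrix (Fin n) (Fin n) ℂ)ᵐᵒᵖ)) =
      {t | leftContraction (Matrix (Fin n) (Fin n) ℂ) t = 0 ∧
           rightContraction (Matrix (Fin n) (Fin n) ℂ) t = 0}) := by
  ext x
  constructor
  · exact fun hx => Stmt15.T_sub_N n x hx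
  · exact fun hx => Stmt15.N_sub_T n x hx.1 hx.2
end

section
/- For any two compact operators A, B on a complex Hilbert space H there exist compact operators K, X, Y such that A + K = X² and B - K = Y². -/
open ContinuousLinearMap Metric Set

section Aux

variable {H : Type*} [NormedAddCommGroup H] [InnerProductSpace ℂ H] [CompleteSpace H]

local notation "⟪" x ", " y "⟫" => @inner ℂ _ _ x y

/-- Key inequality: `‖T* u‖ ^ 2 ≤ ‖T T* u‖ * ‖u‖`. -/
lemma aux_key_ineq (T : H →L[ℂ] H) (u : H) :
    ‖(adjoint T) u‖ ^ 2 ≤ ‖(T ∘L adjoint T) u‖ * ‖u‖ := by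
  set v := (adjoint T) u with hv
  have h1 : ⟪adjoint T u, v⟫ = ⟪u, T v⟫ := ContinuousLinearMap.adjoint_inner_left T v u
  have h2 : (‖v‖ : ℂ) ^ 2 = ⟪u, T v⟫ := by
    rw [← h1, ← hv, inner_self_eq_norm_sq_to_K]
    norm_cast
  have h3 : ‖v‖ ^ 2 = ‖⟪u, T v⟫‖ := by
    rw [← h2]
    simp [← Complex.ofReal_pow, sq_nonneg]
  rw [h3]
  calc ‖⟪u, T v⟫‖ ≤ ‖u‖ * ‖T v‖ := norm_inner_le_norm u (T v)
    _ = ‖(T ∘L adjoint T) u‖ * ‖u‖ := by rw [mul_comm]; rfl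

/-- Schauder's theorem on Hilbert space: the adjoint of a compact operator is compact. -/
lemma aux_adjoint_compact (T : H →L[ℂ] H) (hT : IsCompactOperator ⇑T) :
    IsCompactOperator ⇑(adjoint T) := by
  set S : H →L[ℂ] H := T ∘L adjoint T with hSdef
  have hS : IsCompactOperator ⇑S := hT.comp_clm (adjoint T)
  suffices htb : TotallyBounded (⇑(adjoint T) '' closedBall 0 1) by
    refine ⟨closure (⇑(adjoint T) '' closedBall 0 1),
      htb.closure.isCompact_of_isClosed isClosed_closure, ?_⟩
    filter_upwards [closedBall_mem_nhds (0 : H) one_pos] with x hx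
    exact subset_closure ⟨x, hx, rfl⟩
  -- S '' closedBall 0 1 is totally bounded
  have htbS : TotallyBounded (⇑S '' closedBall 0 1) :=
    ((hS.isCompact_closure_image_closedBall 1).totallyBounded).subset subset_closure
  rw [Metric.totallyBounded_iff]
  intro ε hε
  have hε2 : (0 : ℝ) < (ε/2) ^ 2 / 4 := by positivity
  obtain ⟨t, hts, htfin, htcover⟩ := totallyBounded_iff_subset.mp htbS
    {p : H × H | dist p.1 p.2 < (ε/2) ^ 2 / 4} (Metric.dist_mem_uniformity hε2)
  -- every y ∈ t is of the form S c with c ∈ closedBall 0 1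
  choose c hc hSc using fun (y : H) (hy : y ∈ t) => hts hy
  classical
  haveI : Finite ↑t := htfin
  refine ⟨(fun y : t => adjoint T (c y.1 y.2)) '' Set.univ, (Set.finite_univ.image _), ?_⟩
  rintro _ ⟨x, hx, rfl⟩
  obtain ⟨y, hy, hdy⟩ := Set.mem_iUnion₂.mp (htcover ⟨x, hx, rfl⟩)
  simp only [Set.mem_setOf_eq] at hdy
  refine Set.mem_iUnion₂.mpr ⟨adjoint T (c y hy), ⟨⟨y, hy⟩, Set.mem_univ _, rfl⟩, ?_⟩
  -- show dist (adjoint T x) (adjoint T (c y hy)) < ε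
  have hxball : ‖x‖ ≤ 1 := by simpa using hx
  have hcball : ‖c y hy‖ ≤ 1 := by simpa using hc y hy
  have key := aux_key_ineq T (x - c y hy)
  have hSd : ‖S (x - c y hy)‖ ≤ (ε/2) ^ 2 / 2 := by
    have : S (x - c y hy) = S x - S (c y hy) := map_sub S _ _
    rw [this]
    have h1 : ‖S x - y‖ < (ε/2) ^ 2 / 4 := by simpa [dist_eq_norm] using hdy
    have h2 : S (c y hy) = y := hSc y hy
    rw [h2]
    calc ‖S x - y‖ ≤ (ε/2) ^2/4 := le_of_lt h1
      _ ≤ (ε/2) ^ 2 / 2 := by nlinarith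
  have hnd : ‖x - c y hy‖ ≤ 2 := by
    calc ‖x - c y hy‖ ≤ ‖x‖ + ‖c y hy‖ := norm_sub_le _ _
      _ ≤ 2 := by linarith
  have h4 : ‖adjoint T x - adjoint T (c y hy)‖ ^ 2 ≤ (ε/2) ^ 2 := by
    have := map_sub (adjoint T) x (c y hy)
    calc ‖adjoint T x - adjoint T (c y hy)‖ ^ 2
        = ‖adjoint T (x - c y hy)‖ ^ 2 := by rw [map_sub]
      _ ≤ ‖S (x - c y hy)‖ * ‖x - c y hy‖ := key
      _ ≤ ((ε/2) ^ 2 / 2) * 2 := by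
          apply mul_le_mul hSd hnd (norm_nonneg _) (by positivity)
      _ = (ε/2) ^ 2 := by ring
  have h5 : ‖adjoint T x - adjoint T (c y hy)‖ ≤ ε/2 := by
    nlinarith [norm_nonneg (adjoint T x - adjoint T (c y hy))]
  rw [mem_ball, dist_eq_norm]
  linarith

/-- Compactness is preserved under the non-unital real continuous functional calculus. -/
lemma aux_cfc_compact {a : H →L[ℂ] H} (hsa : IsSelfAdjoint a) (hc : IsCompactOperator ⇑a)
    (f : ℝ → ℝ) (hf : Continuous f) (hf0 : f 0 = 0) : IsCompactOperator ⇑(cfcₙ f a) := by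
  have key : ∀ g : ContinuousMapZero (quasispectrum ℝ a) ℝ,
      IsCompactOperator ⇑(cfcₙHom (R := ℝ) hsa g) := by
    intro g
    induction g using ContinuousMapZero.induction_on_of_compact with
    | zero => rw [map_zero]; exact isCompactOperator_zero
    | id =>
        have hid : (ContinuousMapZero.id (quasispectrum ℝ a)) =
            (⟨(ContinuousMap.id ℝ).restrict (quasispectrum ℝ a), rfl⟩ :
              ContinuousMapZero (quasispectrum ℝ a) ℝ) := by ext x; rfl
        rw [cfcₙHom_id hsa]; exact hc
    | star_id =>
        have hstar : star (ContinuousMapZero.id (quasispectrum ℝ a)) =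
            (⟨(ContinuousMap.id ℝ).restrict (quasispectrum ℝ a), rfl⟩ :
              ContinuousMapZero (quasispectrum ℝ a) ℝ) := by ext x; exact star_trivial _
        rw [show star (ContinuousMapZero.id (quasispectrum ℝ a)) = ContinuousMapZero.id (quasispectrum ℝ a)
          from by ext x; exact star_trivial _, cfcₙHom_id hsa]; exact hc
    | add f g hfc hgc => rw [map_add]; exact hfc.add hgc
    | mul f g hfc hgc =>
        rw [map_mul]
        exact hfc.comp_clm (cfcₙHom (R := ℝ) hsa g)
    | smul r f hfc => rw [map_smul]; exact hfc.smul r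
    | frequently f hfreq =>
        have hclosed : IsClosed {g : ContinuousMapZero (quasispectrum ℝ a) ℝ |
            IsCompactOperator ⇑(cfcₙHom (R := ℝ) hsa g)} := by
          have : {g : ContinuousMapZero (quasispectrum ℝ a) ℝ |
              IsCompactOperator ⇑(cfcₙHom (R := ℝ) hsa g)} =
              (cfcₙHom (R := ℝ) hsa) ⁻¹' {T : H →L[ℂ] H | IsCompactOperator ⇑T} := rfl
          rw [this]
          exact (isClosed_setOf_isCompactOperator (𝕜₁ := ℂ) (𝕜₂ := ℂ)).preimage
            (cfcₙHom_continuous hsa)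
        have hmem := mem_closure_iff_frequently.mpr hfreq
        exact hclosed.closure_subset hmem
  rw [cfcₙ_apply f a (hf.continuousOn) hf0 hsa]
  exact key _

/-- Squares with orthogonal cross terms. -/
lemma aux_sq {H : Type*} [NormedAddCommGroup H] [InnerProductSpace ℂ H] [CompleteSpace H]
    (P N : H →L[ℂ] H) (h1 : P * N = 0) (h2 : N * P = 0) (u v : ℂ) :
    (u • P + v • N) ^ 2 = (u ^ 2) • (P * P) + (v ^ 2) • (N * N) := by
  simp only [pow_two, add_mul, mul_add, smul_mul_assoc, mul_smul_comm, smul_smul, h1, h2,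
    smul_zero, add_zero, zero_add]

/-- Splitting a self-adjoint compact operator as a difference of two squares of commuting
compact operators with product zero (square roots of positive and negative part). -/
lemma aux_decomp (b : H →L[ℂ] H) (hb : IsSelfAdjoint b) (hc : IsCompactOperator ⇑b) :
    ∃ P N : H →L[ℂ] H, IsCompactOperator ⇑P ∧ IsCompactOperator ⇑N ∧
      P * N = 0 ∧ N * P = 0 ∧ P * P - N * N = b := by
  set f : ℝ → ℝ := fun x => Real.sqrt (max x 0) with hfdef
  set g : ℝ → ℝ := fun x => Real.sqrt (max (-x) 0) with hgdef
  have hfc : Continuous f := Real.continuous_sqrt.comp (continuous_id.max continuous_const)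
  have hgc : Continuous g := Real.continuous_sqrt.comp (continuous_neg.max continuous_const)
  have hf0 : f 0 = 0 := by simp [hfdef]
  have hg0 : g 0 = 0 := by simp [hgdef]
  have hfg : ∀ x : ℝ, f x * g x = 0 := by
    intro x
    rcases le_total x 0 with h | h
    · have : max x 0 = 0 := max_eq_right h
      simp [hfdef, this]
    · have : max (-x) 0 = 0 := max_eq_right (by linarith)
      simp [hgdef, this]
  have hff : ∀ x : ℝ, f x * f x = max x 0 :=
    fun x => Real.mul_self_sqrt (le_max_right x 0)
  have hgg : ∀ x : ℝ, g x * g x = max (-x) 0 :=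
    fun x => Real.mul_self_sqrt (le_max_right (-x) 0)
  refine ⟨cfcₙ f b, cfcₙ g b, aux_cfc_compact hb hc f hfc hf0,
    aux_cfc_compact hb hc g hgc hg0, ?_, ?_, ?_⟩
  · rw [← cfcₙ_mul f g b (hf := hfc.continuousOn) (hf0 := hf0) (hg := hgc.continuousOn)
      (hg0 := hg0)]
    have : (fun x => f x * g x) = (fun _ : ℝ => (0 : ℝ)) := funext hfg
    rw [this]
    simp
  · rw [← cfcₙ_mul g f b (hf := hgc.continuousOn) (hf0 := hg0) (hg := hfc.continuousOn)
      (hg0 := hf0)]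
    have : (fun x => g x * f x) = (fun _ : ℝ => (0 : ℝ)) := funext (fun x => by
      rw [mul_comm]; exact hfg x)
    rw [this]
    simp
  · rw [← cfcₙ_mul f f b (hf := hfc.continuousOn) (hf0 := hf0) (hg := hfc.continuousOn)
      (hg0 := hf0),
      ← cfcₙ_mul g g b (hf := hgc.continuousOn) (hf0 := hg0) (hg := hgc.continuousOn)
      (hg0 := hg0),
      ← cfcₙ_sub (fun x => f x * f x) (fun x => g x * g x) b
        (hf := by exact (hfc.mul hfc).continuousOn) (hg := by exact (hgc.mul hgc).continuousOn)]
    have : ∀ x : ℝ, f x * f x - g x * g x = x := by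
      intro x
      rw [hff, hgg]
      rcases le_total x 0 with h | h
      · rw [max_eq_right h, max_eq_left (by linarith)]; ring
      · rw [max_eq_left h, max_eq_right (by linarith)]; ring
    calc cfcₙ (fun x => f x * f x - g x * g x) b = cfcₙ (fun x : ℝ => x) b :=
          cfcₙ_congr (fun x _ => this x)
      _ = b := cfcₙ_id' ℝ b

end Aux

/-- For any two compact operators `A, B` on a complex Hilbert space there exist
compact operators `K, X, Y` with `A + K = X²` and `B - K = Y²`. -/
theorem stmt16 (H : Type*) [NormedAddCommGroup H] [InnerProductSpace ℂ H] [CompleteSpace H]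
    (A B : H →L[ℂ] H) (hA : IsCompactOperator (⇑A)) (hB : IsCompactOperator (⇑B)) :
    ∃ K X Y : H →L[ℂ] H, IsCompactOperator (⇑K) ∧ IsCompactOperator (⇑X) ∧
      IsCompactOperator (⇑Y) ∧ A + K = X ^ 2 ∧ B - K = Y ^ 2 := by
  open ContinuousLinearMap Complex in
  set T : H →L[ℂ] H := A + B with hTdef
  have hT : IsCompactOperator ⇑T := hA.add hB
  have hTs : IsCompactOperator ⇑(adjoint T) := aux_adjoint_compact T hT
  set a1 : H →L[ℂ] H := (2 : ℂ)⁻¹ • (T + adjoint T) with ha1def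
  set b1 : H →L[ℂ] H := (-Complex.I * (2 : ℂ)⁻¹) • (T - adjoint T) with hb1def
  have ha1 : IsSelfAdjoint a1 := by
    rw [IsSelfAdjoint, ha1def, star_smul, star_add, ContinuousLinearMap.star_eq_adjoint,
      ContinuousLinearMap.star_eq_adjoint, adjoint_adjoint]
    rw [add_comm (adjoint T) T]
    congr 1
    simp
  have hb1 : IsSelfAdjoint b1 := by
    rw [IsSelfAdjoint, hb1def, star_smul, star_sub, ContinuousLinearMap.star_eq_adjoint,
      ContinuousLinearMap.star_eq_adjoint, adjoint_adjoint]
    have h1 : star (-Complex.I * (2 : ℂ)⁻¹) = Complex.I * (2 : ℂ)⁻¹ := by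
      simp [Complex.conj_I]
    rw [h1]
    have h2 : adjoint T - T = -(T - adjoint T) := by abel
    rw [h2, smul_neg, ← neg_smul, neg_mul]
  have ha1c : IsCompactOperator ⇑a1 := ((hT.add hTs).smul ((2 : ℂ)⁻¹))
  have hb1c : IsCompactOperator ⇑b1 := ((hT.sub hTs).smul (-Complex.I * (2 : ℂ)⁻¹))
  obtain ⟨P₁, N₁, hP₁, hN₁, hPN₁, hNP₁, hsq₁⟩ := aux_decomp a1 ha1 ha1c
  obtain ⟨P₂, N₂, hP₂, hN₂, hPN₂, hNP₂, hsq₂⟩ := aux_decomp b1 hb1 hb1c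
  set X : H →L[ℂ] H := (1 : ℂ) • P₁ + Complex.I • N₁ with hXdef
  set u : ℂ := (1 + Complex.I) / (Real.sqrt 2 : ℂ) with hudef
  set v : ℂ := (1 - Complex.I) / (Real.sqrt 2 : ℂ) with hvdef
  have hs2 : ((Real.sqrt 2 : ℝ) : ℂ) ^ 2 = 2 := by
    rw [← Complex.ofReal_pow, Real.sq_sqrt (by norm_num : (0:ℝ) ≤ 2)]
    norm_num
  have hu2 : u ^ 2 = Complex.I := by
    rw [hudef, div_pow, hs2]
    have : (1 + Complex.I) ^ 2 = 2 * Complex.I := by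
      have := Complex.I_sq
      ring_nf
      rw [Complex.I_sq]
      ring
    rw [this]
    ring
  have hv2 : v ^ 2 = -Complex.I := by
    rw [hvdef, div_pow, hs2]
    have : (1 - Complex.I) ^ 2 = -(2 * Complex.I) := by
      ring_nf
      rw [Complex.I_sq]
      ring
    rw [this]
    ring
  set Y : H →L[ℂ] H := u • P₂ + v • N₂ with hYdef
  have hX2 : X ^ 2 = a1 := by
    rw [hXdef, aux_sq P₁ N₁ hPN₁ hNP₁, one_pow, Complex.I_sq, one_smul, neg_one_smul,
      ← sub_eq_add_neg, hsq₁]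
  have hY2 : Y ^ 2 = Complex.I • b1 := by
    rw [hYdef, aux_sq P₂ N₂ hPN₂ hNP₂, hu2, hv2, neg_smul, ← sub_eq_add_neg, ← smul_sub, hsq₂]
  have hsum : a1 + Complex.I • b1 = T := by
    rw [ha1def, hb1def, smul_smul]
    have hco : Complex.I * (-Complex.I * (2 : ℂ)⁻¹) = (2 : ℂ)⁻¹ := by
      have := Complex.I_mul_I
      ring_nf
      rw [Complex.I_sq]
      ring
    rw [hco]
    rw [smul_add, smul_sub]
    module
  have hXc : IsCompactOperator ⇑X := (hP₁.smul (1 : ℂ)).add (hN₁.smul Complex.I)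
  have hYc : IsCompactOperator ⇑Y := (hP₂.smul u).add (hN₂.smul v)
  refine ⟨X ^ 2 - A, X, Y, ?_, hXc, hYc, by abel, ?_⟩
  · rw [hX2]
    exact ha1c.sub hA
  · rw [hY2, hX2]
    have : B - (a1 - A) = (A + B) - a1 := by abel
    rw [this, ← hTdef, ← hsum]
    abel
end

section
/- Let λ_{k,m} be a finitely supported family of scalars and set μ_n = Σ_{k+m=n} λ_{k,m}. If some μ_n ≠ 0 with n ≥ 1, then there exist a commutative algebra A, a linear subspace L of A (hence a Lie ideal), and elements a, b ∈ L such that Σ_{k,m} λ_{k,m} a^k b a^m ∉ L. -/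
/-- If `μ_n = Σ_{k+m=n} λ_{k,m} ≠ 0` for some `n ≥ 1`, then there exist a
commutative algebra `A`, a linear subspace `L` (hence a Lie ideal) and `a, b ∈ L` with
`Σ_{k,m} λ_{k,m} a^k b a^m ∉ L`. -/
theorem stmt18 (s : Finset (ℕ × ℕ)) (lam : ℕ × ℕ → ℂ) (n : ℕ) (hn : 1 ≤ n)
    (h : ∑ p ∈ s.filter (fun p => p.1 + p.2 = n), lam p ≠ 0) :
    ∃ (A : Type) (_ : CommRing A), ∃ (_ : Algebra ℂ A),
      ∃ (L : Submodule ℂ A) (a b : A), a ∈ L ∧ b ∈ L ∧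
        (∑ p ∈ s, lam p • (a ^ p.1 * b * a ^ p.2)) ∉ L := by
  refine ⟨Polynomial ℂ, inferInstance, inferInstance,
    Submodule.span ℂ {Polynomial.X}, Polynomial.X, Polynomial.X,
    Submodule.subset_span rfl, Submodule.subset_span rfl, ?_⟩
  intro hmem
  rw [Submodule.mem_span_singleton] at hmem
  obtain ⟨c, hc⟩ := hmem
  have hco := congrArg (fun q => Polynomial.coeff q (n + 1)) hc
  simp only [Polynomial.coeff_smul, Polynomial.finset_sum_coeff] at hco
  have h1 : Polynomial.coeff (Polynomial.X : Polynomial ℂ) (n + 1) = 0 := by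
    rw [Polynomial.coeff_X]
    simp [Nat.succ_ne_succ]
    omega
  rw [h1, smul_zero] at hco
  apply h
  rw [show ∑ p ∈ Finset.filter (fun p => p.1 + p.2 = n) s, lam p
      = ∑ x ∈ s, lam x • (Polynomial.X ^ x.1 * Polynomial.X * Polynomial.X ^ x.2).coeff (n + 1)
    from ?_, ← hco]
  rw [Finset.sum_filter]
  apply Finset.sum_congr rfl
  intro p _
  have : (Polynomial.X : Polynomial ℂ) ^ p.1 * Polynomial.X * Polynomial.X ^ p.2
      = Polynomial.X ^ (p.1 + p.2 + 1) := by ring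
  rw [this, Polynomial.coeff_X_pow]
  by_cases hp : p.1 + p.2 = n
  · simp [hp, smul_eq_mul]
  · rw [if_neg hp, if_neg (show ¬ n + 1 = p.1 + p.2 + 1 by omega), smul_zero]
end
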